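/- Let K be a field, I ⊆ K[x_1,…,x_n] an ideal, and ω ∈ (ℝ_{≥0})^n. Then In_ω I contains no monomial if and only if for every ν ∈ C_ω(I) the ideal In_ν I contains no monomial. Equivalently, ω belongs to the tropical variety TV(I) if and only if the whole Gröbner cone C_ω(I) is contained in TV(I). -/

import Mathlib

open MvPolynomial Matrix

open Classical in
/-- The `w`-initial part of a multivariate polynomial: the sum of the terms whose
exponents have minimal `w`-weight among the exponents of `f`. -/
noncomputable def initialPart {n : ℕ} {K : Type*} [CommSemiring K] (w : Fin n → ℝ)
    (f : MvPolynomial (Fin n) K) : MvPolynomial (Fin n) K :=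
  ∑ μ ∈ f.support,
    if ∀ ν ∈ f.support, ∑ i, w i * (μ i : ℝ) ≤ ∑ i, w i * (ν i : ℝ)
    then monomial μ (f.coeff μ) else 0

/-- The `w`-initial ideal of an ideal `I`: the ideal generated by the `w`-initial
parts of the nonzero elements of `I`. -/
noncomputable def initialIdeal {n : ℕ} {K : Type*} [CommSemiring K] (w : Fin n → ℝ)
    (I : Ideal (MvPolynomial (Fin n) K)) : Ideal (MvPolynomial (Fin n) K) :=
  Ideal.span {g | ∃ f ∈ I, f ≠ 0 ∧ g = initialPart w f}

/-- The Gröbner cone of `I` at `w`: the closure in `ℝ^n` of the set of nonnegative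
vectors `u` with `In_u I = In_w I`. -/
noncomputable def groebnerCone {n : ℕ} {K : Type*} [CommSemiring K] (w : Fin n → ℝ)
    (I : Ideal (MvPolynomial (Fin n) K)) : Set (Fin n → ℝ) :=
  closure {u : Fin n → ℝ | (∀ i, 0 ≤ u i) ∧ initialIdeal u I = initialIdeal w I}

namespace TropAux

variable {n : ℕ} {K : Type*}

/-- weight of an exponent vector -/
noncomputable def wt (v : Fin n → ℝ) (μ : Fin n →₀ ℕ) : ℝ := ∑ i, v i * (μ i : ℝ)

lemma wt_add (v : Fin n → ℝ) (μ ν : Fin n →₀ ℕ) : wt v (μ + ν) = wt v μ + wt v ν := by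
  simp [wt, Finsupp.add_apply, mul_add, Finset.sum_add_distrib]

open Classical in
/-- the weight-`r` homogeneous component -/
noncomputable def comp [CommSemiring K] (v : Fin n → ℝ) (r : ℝ) (p : MvPolynomial (Fin n) K) :
    MvPolynomial (Fin n) K :=
  ∑ μ ∈ p.support, if wt v μ = r then monomial μ (p.coeff μ) else 0

open Classical in
lemma coeff_comp [CommSemiring K] (v : Fin n → ℝ) (r : ℝ) (p : MvPolynomial (Fin n) K)
    (μ : Fin n →₀ ℕ) :
    coeff μ (comp v r p) = if wt v μ = r then coeff μ p else 0 := by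
  rw [comp, coeff_sum]
  by_cases hμ : μ ∈ p.support
  · rw [Finset.sum_eq_single_of_mem μ hμ]
    · split_ifs <;> simp [coeff_monomial]
    · intro ν hν hne
      split_ifs <;> simp [coeff_monomial, hne]
  · have h0 : coeff μ p = 0 := notMem_support_iff.mp hμ
    rw [Finset.sum_eq_zero, eq_comm]
    · split_ifs <;> simp [h0]
    · intro ν hν
      have hne : ν ≠ μ := fun h => hμ (h ▸ hν)
      split_ifs <;> simp [coeff_monomial, hne]

open Classical in
lemma coeff_initialPart [CommSemiring K] (v : Fin n → ℝ) (f : MvPolynomial (Fin n) K)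
    (μ : Fin n →₀ ℕ) :
    coeff μ (initialPart v f) =
      if ∀ ν ∈ f.support, wt v μ ≤ wt v ν then coeff μ f else 0 := by
  have hdef : initialPart v f =
      ∑ μ ∈ f.support, if ∀ ν ∈ f.support, wt v μ ≤ wt v ν
        then monomial μ (f.coeff μ) else 0 := rfl
  rw [hdef, coeff_sum]
  by_cases hμ : μ ∈ f.support
  · rw [Finset.sum_eq_single_of_mem μ hμ]
    · split_ifs <;> simp [coeff_monomial]
    · intro ν hν hne
      split_ifs <;> simp [coeff_monomial, hne]
  · have h0 : coeff μ f = 0 := notMem_support_iff.mp hμ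
    rw [Finset.sum_eq_zero, eq_comm]
    · split_ifs <;> simp [h0]
    · intro ν hν
      have hne : ν ≠ μ := fun h => hμ (h ▸ hν)
      split_ifs <;> simp [coeff_monomial, hne]

lemma comp_zero [CommSemiring K] (v : Fin n → ℝ) (r : ℝ) :
    comp v r (0 : MvPolynomial (Fin n) K) = 0 := by
  simp [comp]

lemma comp_add [CommSemiring K] (v : Fin n → ℝ) (r : ℝ) (p q : MvPolynomial (Fin n) K) :
    comp v r (p + q) = comp v r p + comp v r q := by
  ext μ
  rw [coeff_add, coeff_comp, coeff_comp, coeff_comp, coeff_add]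
  split_ifs <;> simp

lemma comp_sum [CommSemiring K] {X : Type*} (v : Fin n → ℝ) (r : ℝ) (t : Finset X)
    (g : X → MvPolynomial (Fin n) K) :
    comp v r (∑ x ∈ t, g x) = ∑ x ∈ t, comp v r (g x) := by
  classical
  induction t using Finset.induction_on with
  | empty => simp [comp_zero]
  | insert _ _ h ih => rw [Finset.sum_insert h, Finset.sum_insert h, comp_add, ih]

lemma mem_support_comp [CommSemiring K] {v : Fin n → ℝ} {r : ℝ} {p : MvPolynomial (Fin n) K}
    {μ : Fin n →₀ ℕ} (h : μ ∈ (comp v r p).support) :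
    wt v μ = r ∧ μ ∈ p.support := by
  have hc := mem_support_iff.mp h
  rw [coeff_comp] at hc
  by_cases hr : wt v μ = r
  · rw [if_pos hr] at hc
    exact ⟨hr, mem_support_iff.mpr hc⟩
  · rw [if_neg hr] at hc
    exact absurd rfl hc

/-- recovery of the initial part from a nonzero minimal-weight component -/
lemma core [CommSemiring K] {v : Fin n → ℝ} {f x : MvPolynomial (Fin n) K} {μ0 : Fin n →₀ ℕ}
    (hx : initialPart v f = x) (hμ0 : μ0 ∈ x.support) :
    (∀ μ ∈ f.support, wt v μ0 ≤ wt v μ) ∧ comp v (wt v μ0) x = x ∧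
      comp v (wt v μ0) f = x := by
  have hc0 := mem_support_iff.mp hμ0
  rw [← hx, coeff_initialPart] at hc0
  have hmin : ∀ ν ∈ f.support, wt v μ0 ≤ wt v ν := by
    by_contra hcon
    rw [if_neg hcon] at hc0
    exact hc0 rfl
  rw [if_pos hmin] at hc0
  have hμ0f : μ0 ∈ f.support := mem_support_iff.mpr hc0
  refine ⟨hmin, ?_, ?_⟩
  · ext μ
    rw [coeff_comp]
    by_cases hr : wt v μ = wt v μ0
    · rw [if_pos hr]
    · rw [if_neg hr, eq_comm]
      by_contra hne
      have hμx : μ ∈ x.support := mem_support_iff.mpr hne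
      have hcx := mem_support_iff.mp hμx
      rw [← hx, coeff_initialPart] at hcx
      have hminμ : ∀ ν ∈ f.support, wt v μ ≤ wt v ν := by
        by_contra hcon
        rw [if_neg hcon] at hcx; exact hcx rfl
      rw [if_pos hminμ] at hcx
      have hμf : μ ∈ f.support := mem_support_iff.mpr hcx
      exact hr (le_antisymm (hminμ μ0 hμ0f) (hmin μ hμf))
  · ext μ
    rw [coeff_comp, ← hx, coeff_initialPart]
    by_cases hμf : μ ∈ f.support
    · by_cases hr : wt v μ = wt v μ0
      · rw [if_pos hr, if_pos]
        intro ν hν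
        rw [hr]; exact hmin ν hν
      · rw [if_neg hr, if_neg]
        intro hminμ
        exact hr (le_antisymm (hminμ μ0 hμ0f) (hmin μ hμf))
    · have h0 : coeff μ f = 0 := notMem_support_iff.mp hμf
      split_ifs <;> simp [h0]

/-- if `f` has all weights `≥ r` and a nonzero weight-`r` component, that component is its
initial part -/
lemma recog [CommSemiring K] {v : Fin n → ℝ} {r : ℝ} {f x : MvPolynomial (Fin n) K}
    (hf : ∀ μ ∈ f.support, r ≤ wt v μ) (hc : comp v r f = x) (hx : x ≠ 0) :
    f ≠ 0 ∧ initialPart v f = x := by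
  obtain ⟨μ0, hμ0⟩ := ne_zero_iff.mp hx
  rw [← hc, coeff_comp] at hμ0
  by_cases hr : wt v μ0 = r
  swap
  · rw [if_neg hr] at hμ0; exact absurd rfl hμ0
  rw [if_pos hr] at hμ0
  have hμ0f : μ0 ∈ f.support := mem_support_iff.mpr hμ0
  refine ⟨ne_zero_iff.mpr ⟨μ0, hμ0⟩, ?_⟩
  ext μ
  rw [coeff_initialPart, ← hc, coeff_comp]
  by_cases hμf : μ ∈ f.support
  · by_cases hwr : wt v μ = r
    · rw [if_pos hwr, if_pos]
      intro ν hν; rw [hwr]; exact hf ν hν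
    · rw [if_neg hwr, if_neg]
      intro hminμ
      exact hwr (le_antisymm (hr ▸ hminμ μ0 hμ0f) (hf μ hμf))
  · have h0 : coeff μ f = 0 := notMem_support_iff.mp hμf
    split_ifs <;> simp [h0]

open Classical in
lemma decomp [CommSemiring K] (v : Fin n → ℝ) (p : MvPolynomial (Fin n) K) :
    ∑ s ∈ p.support.image (wt v), comp v s p = p := by
  ext μ
  rw [coeff_sum]
  simp only [coeff_comp]
  rw [Finset.sum_ite_eq]
  by_cases hμ : μ ∈ p.support
  · rw [if_pos (Finset.mem_image_of_mem _ hμ)]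
  · have h0 : coeff μ p = 0 := notMem_support_iff.mp hμ
    split_ifs <;> simp [h0]

lemma comp_monomial_mul [CommSemiring K] (v : Fin n → ℝ) (r : ℝ) (α : Fin n →₀ ℕ) (c : K)
    (p : MvPolynomial (Fin n) K) :
    comp v r (monomial α c * p) = monomial α c * comp v (r - wt v α) p := by
  ext μ
  rw [coeff_comp, coeff_monomial_mul', coeff_monomial_mul', coeff_comp]
  by_cases hle : α ≤ μ
  · rw [if_pos hle, if_pos hle]
    have hw : wt v (μ - α) = wt v μ - wt v α := by
      have h2 : μ - α + α = μ := tsub_add_cancel_of_le hle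
      have h3 := wt_add v (μ - α) α
      rw [h2] at h3; linarith
    by_cases h : wt v μ = r
    · rw [if_pos h, if_pos (by rw [hw, h])]
    · rw [if_neg h, if_neg (by rw [hw]; intro hx; exact h (by linarith)), mul_zero]
  · rw [if_neg hle, if_neg hle]
    split_ifs <;> rfl

lemma comp_isobaric_mul [CommSemiring K] {v : Fin n → ℝ} {s : ℝ} {q : MvPolynomial (Fin n) K}
    (hq : ∀ α ∈ q.support, wt v α = s) (r : ℝ) (p : MvPolynomial (Fin n) K) :
    comp v r (q * p) = q * comp v (r - s) p := by
  have h1 : q * p = ∑ α ∈ q.support, monomial α (coeff α q) * p := by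
    rw [← Finset.sum_mul, ← q.as_sum]
  have h2 : q * comp v (r - s) p = ∑ α ∈ q.support, monomial α (coeff α q) * comp v (r - s) p := by
    rw [← Finset.sum_mul, ← q.as_sum]
  rw [h1, comp_sum, h2]
  exact Finset.sum_congr rfl fun α hα => by rw [comp_monomial_mul, hq α hα]

/-- elements that are (zero or) initial parts of nonzero elements of `I`, isobaric of
weight `r` -/
def Good [CommSemiring K] (v : Fin n → ℝ) (I : Ideal (MvPolynomial (Fin n) K)) (r : ℝ)
    (x : MvPolynomial (Fin n) K) : Prop :=
  (∀ μ ∈ x.support, wt v μ = r) ∧ (x = 0 ∨ ∃ f, f ∈ I ∧ f ≠ 0 ∧ initialPart v f = x)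

lemma good_zero [CommSemiring K] (v : Fin n → ℝ) (I : Ideal (MvPolynomial (Fin n) K)) (r : ℝ) :
    Good v I r (0 : MvPolynomial (Fin n) K) :=
  ⟨by simp, Or.inl rfl⟩

lemma good_add [CommSemiring K] {v : Fin n → ℝ} {I : Ideal (MvPolynomial (Fin n) K)} {r : ℝ}
    {x y : MvPolynomial (Fin n) K} (hx : Good v I r x) (hy : Good v I r y) :
    Good v I r (x + y) := by
  classical
  refine ⟨?_, ?_⟩
  · intro μ hμ
    rcases Finset.mem_union.mp (MvPolynomial.support_add hμ) with h | h
    exacts [hx.1 μ h, hy.1 μ h]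
  · by_cases hx0 : x = 0
    · subst hx0; simpa using hy.2
    by_cases hy0 : y = 0
    · subst hy0; simpa using hx.2
    rcases hx.2 with rfl | ⟨f1, hf1I, hf10, hf1⟩
    · exact absurd rfl hx0
    rcases hy.2 with rfl | ⟨f2, hf2I, hf20, hf2⟩
    · exact absurd rfl hy0
    by_cases hxy : x + y = 0
    · exact Or.inl hxy
    right
    obtain ⟨μ0, hμ0⟩ := ne_zero_iff.mp hx0
    have hμ0x : μ0 ∈ x.support := mem_support_iff.mpr hμ0
    have hr0 : wt v μ0 = r := hx.1 μ0 hμ0x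
    obtain ⟨hmin1, -, hcomp1⟩ := core hf1 hμ0x
    rw [hr0] at hmin1 hcomp1
    obtain ⟨μ1, hμ1⟩ := ne_zero_iff.mp hy0
    have hμ1y : μ1 ∈ y.support := mem_support_iff.mpr hμ1
    have hr1 : wt v μ1 = r := hy.1 μ1 hμ1y
    obtain ⟨hmin2, -, hcomp2⟩ := core hf2 hμ1y
    rw [hr1] at hmin2 hcomp2
    have h1 : ∀ μ ∈ (f1 + f2).support, r ≤ wt v μ := by
      intro μ hμ
      rcases Finset.mem_union.mp (MvPolynomial.support_add hμ) with h | h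
      exacts [hmin1 μ h, hmin2 μ h]
    have h2 : comp v r (f1 + f2) = x + y := by rw [comp_add, hcomp1, hcomp2]
    obtain ⟨hne, hip⟩ := recog h1 h2 hxy
    exact ⟨f1 + f2, I.add_mem hf1I hf2I, hne, hip⟩

lemma good_sum [CommSemiring K] {X : Type*} {v : Fin n → ℝ} {I : Ideal (MvPolynomial (Fin n) K)}
    {r : ℝ} {t : Finset X} {g : X → MvPolynomial (Fin n) K}
    (h : ∀ i ∈ t, Good v I r (g i)) : Good v I r (∑ i ∈ t, g i) := by
  classical
  induction t using Finset.induction_on with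
  | empty => simpa using good_zero v I r
  | insert _ _ hni ih =>
    rw [Finset.sum_insert hni]
    exact good_add (h _ (Finset.mem_insert_self _ _))
      (ih fun i hi => h i (Finset.mem_insert_of_mem hi))

lemma good_mul [CommSemiring K] {v : Fin n → ℝ} {I : Ideal (MvPolynomial (Fin n) K)} {s t : ℝ}
    {q x : MvPolynomial (Fin n) K} (hq : ∀ α ∈ q.support, wt v α = s) (hx : Good v I t x) :
    Good v I (s + t) (q * x) := by
  classical
  refine ⟨?_, ?_⟩
  · intro μ hμ
    rcases Finset.mem_add.mp (MvPolynomial.support_mul q x hμ) with ⟨α, hα, β, hβ, hsum⟩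
    rw [← hsum, wt_add, hq α hα, hx.1 β hβ]
  · by_cases h0 : q * x = 0
    · exact Or.inl h0
    right
    have hxne : x ≠ 0 := by rintro rfl; simp at h0
    rcases hx.2 with rfl | ⟨f, hfI, hf0, hf⟩
    · exact absurd rfl hxne
    obtain ⟨μ0, hμ0⟩ := ne_zero_iff.mp hxne
    have hμ0x : μ0 ∈ x.support := mem_support_iff.mpr hμ0
    have hr : wt v μ0 = t := hx.1 μ0 hμ0x
    obtain ⟨hmin, -, hcomp⟩ := core hf hμ0x
    rw [hr] at hmin hcomp
    have h1 : ∀ μ ∈ (q * f).support, s + t ≤ wt v μ := by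
      intro μ hμ
      rcases Finset.mem_add.mp (MvPolynomial.support_mul q f hμ) with ⟨α, hα, β, hβ, hsum⟩
      rw [← hsum, wt_add, hq α hα]
      exact (add_le_add_iff_left s).mpr (hmin β hβ)
    have h2 : comp v (s + t) (q * f) = q * x := by
      rw [comp_isobaric_mul hq, add_sub_cancel_left, hcomp]
    obtain ⟨hne, hip⟩ := recog h1 h2 h0
    exact ⟨q * f, Ideal.mul_mem_left I q hfI, hne, hip⟩

lemma main [CommSemiring K] {v : Fin n → ℝ} {I : Ideal (MvPolynomial (Fin n) K)}
    {p : MvPolynomial (Fin n) K} (hp : p ∈ initialIdeal v I) :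
    ∀ r : ℝ, Good v I r (comp v r p) := by
  refine Submodule.span_induction ?_ ?_ ?_ ?_ hp
  · rintro x ⟨f, hfI, hf0, hx⟩ r
    refine ⟨fun μ hμ => (mem_support_comp hμ).1, ?_⟩
    by_cases h0 : comp v r x = 0
    · exact Or.inl h0
    right
    obtain ⟨μ0, hμ0⟩ := ne_zero_iff.mp h0
    have hμ0m := mem_support_comp (mem_support_iff.mpr hμ0)
    obtain ⟨-, hcx, -⟩ := core hx.symm hμ0m.2
    rw [hμ0m.1] at hcx
    exact ⟨f, hfI, hf0, by rw [hcx, ← hx]⟩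
  · intro r
    rw [comp_zero]
    exact good_zero v I r
  · intro x y _ _ ihx ihy r
    rw [comp_add]
    exact good_add (ihx r) (ihy r)
  · intro a x _ ih r
    have hdecomp : a • x = ∑ s ∈ a.support.image (wt v), comp v s a * x := by
      rw [← Finset.sum_mul, decomp, smul_eq_mul]
    rw [hdecomp, comp_sum]
    refine good_sum fun s _ => ?_
    rw [comp_isobaric_mul (fun α hα => (mem_support_comp hα).1)]
    have hst : s + (r - s) = r := by ring
    have hg := good_mul (q := comp v s a) (s := s) (fun α hα => (mem_support_comp hα).1) (ih (r - s))
    rwa [hst] at hg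

lemma exists_of_monomial_mem [Field K] {v : Fin n → ℝ} {I : Ideal (MvPolynomial (Fin n) K)}
    {a : Fin n →₀ ℕ} (h : monomial a (1 : K) ∈ initialIdeal v I) :
    ∃ f, f ∈ I ∧ f ≠ 0 ∧ initialPart v f = monomial a 1 := by
  have hm : comp v (wt v a) (monomial a (1 : K)) = monomial a 1 := by
    ext μ
    rw [coeff_comp, coeff_monomial]
    by_cases hμ : a = μ
    · subst hμ; simp
    · rw [if_neg hμ]
      split_ifs <;> rfl
  have hgood := (main h (wt v a)).2
  rw [hm] at hgood
  rcases hgood with h0 | hf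
  · exact absurd (monomial_eq_zero.mp h0) one_ne_zero
  · exact hf

end TropAux

open TropAux in
/-- For `ω` in the first orthant, the initial ideal `In_ω I` contains no
monomial if and only if for every `ν` in the Gröbner cone `C_ω(I)` the initial ideal
`In_ν I` contains no monomial; i.e. `ω ∈ TV(I)` iff `C_ω(I) ⊆ TV(I)`. -/
theorem monomialFree_initialIdeal_iff_forall_groebnerCone {n : ℕ} {K : Type*} [Field K]
    (I : Ideal (MvPolynomial (Fin n) K)) (w : Fin n → ℝ) (hw : ∀ i, 0 ≤ w i) :
    (∀ a : Fin n →₀ ℕ, (monomial a (1 : K)) ∉ initialIdeal w I) ↔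
      ∀ v ∈ groebnerCone w I, ∀ a : Fin n →₀ ℕ, (monomial a (1 : K)) ∉ initialIdeal v I := by
  classical
  constructor
  · intro h v hv a hmem
    obtain ⟨f, hfI, hf0, hinit⟩ := exists_of_monomial_mem hmem
    have ha : a ∈ (monomial a (1 : K)).support := by
      simp [support_monomial]
    obtain ⟨hmin, -, hcomp⟩ := core hinit ha
    have hca : coeff a f = 1 := by
      have hc := congrArg (coeff a) hcomp
      rw [coeff_comp, if_pos rfl, coeff_monomial, if_pos rfl] at hc
      exact hc
    have haf : a ∈ f.support := mem_support_iff.mpr (by rw [hca]; exact one_ne_zero)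
    have hstrict : ∀ μ ∈ f.support, μ ≠ a → wt v a < wt v μ := by
      intro μ hμ hne
      rcases lt_or_eq_of_le (hmin μ hμ) with h' | h'
      · exact h'
      · exfalso
        have hc := congrArg (coeff μ) hcomp
        rw [coeff_comp, if_pos h'.symm, coeff_monomial, if_neg (fun he => hne he.symm)] at hc
        exact mem_support_iff.mp hμ hc
    set U : Set (Fin n → ℝ) := ⋂ μ ∈ f.support.erase a, {u : Fin n → ℝ | wt u a < wt u μ}
      with hU
    have hUopen : IsOpen U := by
      refine isOpen_biInter_finset fun μ _ => ?_
      have hcont : Continuous fun u : Fin n → ℝ => wt u μ - wt u a := by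
        unfold wt
        fun_prop
      have hop : IsOpen {u : Fin n → ℝ | 0 < wt u μ - wt u a} :=
        isOpen_lt continuous_const hcont
      convert hop using 1
      ext u
      simp [sub_pos]
    have hvU : v ∈ U := by
      rw [hU]
      simp only [Set.mem_iInter]
      intro μ hμ
      rw [Finset.mem_erase] at hμ
      exact hstrict μ hμ.2 hμ.1
    obtain ⟨u, huU, hupos, huId⟩ := mem_closure_iff.mp hv U hUopen hvU
    have hustrict : ∀ μ ∈ f.support, μ ≠ a → wt u a < wt u μ := by
      intro μ hμ hne
      have h1 := Set.mem_iInter.mp (hU ▸ huU) μ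
      exact Set.mem_iInter.mp h1 (Finset.mem_erase.mpr ⟨hne, hμ⟩)
    have hinitu : initialPart u f = monomial a (1 : K) := by
      ext μ
      rw [coeff_initialPart, coeff_monomial]
      by_cases hμa : a = μ
      · subst hμa
        rw [if_pos rfl, if_pos, hca]
        intro ν hν
        by_cases hν' : ν = a
        · subst hν'; exact le_refl _
        · exact le_of_lt (hustrict ν hν hν')
      · rw [if_neg hμa]
        by_cases hμf : μ ∈ f.support
        · rw [if_neg]
          intro hcond
          exact absurd (hcond a haf) (not_le.mpr (hustrict μ hμf (fun he => hμa he.symm)))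
        · rw [notMem_support_iff.mp hμf]
          split_ifs <;> rfl
    have hmem' : monomial a (1 : K) ∈ initialIdeal u I := by
      rw [← hinitu]
      exact Ideal.subset_span ⟨f, hfI, hf0, rfl⟩
    rw [huId] at hmem'
    exact h a hmem'
  · intro h a
    exact h w (subset_closure ⟨hw, rfl⟩) a
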